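/- Suppose every matrix in ℂ^{n×n} can be approximated to arbitrary precision (in operator norm) by a product of 2n−1 alternating circulant and diagonal matrices (Huhtanen–Perämäki). Let N = f_{W_L,b_L} ∘ ... ∘ f_{W_1,b_1} be a deep ReLU network of width n and depth L, and let X ⊂ ℂⁿ be bounded. Then for any ε > 0 there exists a diagonal-circulant network N′ of width n and depth (2n−1)L (i.e., a composition of maps z ↦ φ(D C z + β) with D diagonal, C circulant, and φ either complex ReLU or identity) such that ‖N(x) − N′(x)‖ < ε for all x ∈ X. -/

import Mathlib

open scoped Matrix.Norms.L2Operator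

/-- Componentwise complex ReLU: `ReLU(z) = max(0, Re z) + i·max(0, Im z)`. -/
noncomputable def creluC {n : ℕ} (z : EuclideanSpace ℂ (Fin n)) : EuclideanSpace ℂ (Fin n) :=
  WithLp.toLp 2 (fun i => Complex.mk (max 0 (z i).re) (max 0 (z i).im))

/-- The circulant matrix `circ(c)`, whose `(p,q)` entry is `c_{(p−q) mod n}`. -/
def circMat {n : ℕ} [NeZero n] (c : Fin n → ℂ) : Matrix (Fin n) (Fin n) ℂ :=
  fun p q => c (p - q)

/-- A matrix is circulant if it is `circ(c)` for some `c`. -/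
def IsCirculant {n : ℕ} [NeZero n] (M : Matrix (Fin n) (Fin n) ℂ) : Prop :=
  ∃ c : Fin n → ℂ, M = circMat c

/-- A matrix is diagonal if it is `diagonal d` for some `d`. -/
def IsDiagonalM {n : ℕ} (M : Matrix (Fin n) (Fin n) ℂ) : Prop :=
  ∃ d : Fin n → ℂ, M = Matrix.diagonal d

/-- Alternating circulant (odd 1-based positions) / diagonal (even positions). -/
def Alternating {n m : ℕ} [NeZero n] (B : Fin m → Matrix (Fin n) (Fin n) ℂ) : Prop :=
  ∀ i : Fin m, (Even (i : ℕ) → IsCirculant (B i)) ∧ (Odd (i : ℕ) → IsDiagonalM (B i))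

/-- The deep ReLU network `f_{W_L,b_L} ∘ ⋯ ∘ f_{W_1,b_1}` (0-indexed). -/
noncomputable def reluNet {n : ℕ} (W : ℕ → Matrix (Fin n) (Fin n) ℂ)
    (b : ℕ → EuclideanSpace ℂ (Fin n)) : ℕ → EuclideanSpace ℂ (Fin n) → EuclideanSpace ℂ (Fin n)
  | 0, x => x
  | (L + 1), x => creluC (Matrix.toEuclideanLin (W L) (reluNet W b L x) + b L)

/-- A diagonal-circulant network: a composition of layers `z ↦ φ(D C z + β)` with `D`
diagonal, `C` circulant, and `φ` either the complex ReLU (`act = true`) or the identity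
(`act = false`). -/
noncomputable def dcNet {n : ℕ} [NeZero n] (D C : ℕ → Fin n → ℂ)
    (β : ℕ → EuclideanSpace ℂ (Fin n)) (act : ℕ → Bool) :
    ℕ → EuclideanSpace ℂ (Fin n) → EuclideanSpace ℂ (Fin n)
  | 0, x => x
  | (L + 1), x =>
      (if act L then creluC else id)
        (Matrix.toEuclideanLin (Matrix.diagonal (D L) * circMat (C L)) (dcNet D C β act L x)
          + β L)



lemma dcNet_succ {n : ℕ} [NeZero n] (D C : ℕ → Fin n → ℂ) (β : ℕ → EuclideanSpace ℂ (Fin n))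
    (act : ℕ → Bool) (k : ℕ) (x : EuclideanSpace ℂ (Fin n)) :
    dcNet D C β act (k + 1) x =
      (if act k then creluC else id)
        (Matrix.toEuclideanLin (Matrix.diagonal (D k) * circMat (C k)) (dcNet D C β act k x)
          + β k) := rfl

lemma circMat_delta {n : ℕ} [NeZero n] :
    circMat (fun k : Fin n => if k = 0 then (1 : ℂ) else 0) = 1 := by
  ext p q
  simp [circMat, Matrix.one_apply, sub_eq_zero]

lemma toEuc_one {n : ℕ} (x : EuclideanSpace ℂ (Fin n)) :
    Matrix.toEuclideanLin (1 : Matrix (Fin n) (Fin n) ℂ) x = x := by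
  simp [Matrix.toEuclideanLin_apply, Matrix.one_mulVec]

lemma toEuc_mul {n : ℕ} (A B : Matrix (Fin n) (Fin n) ℂ) (x : EuclideanSpace ℂ (Fin n)) :
    Matrix.toEuclideanLin (A * B) x = Matrix.toEuclideanLin A (Matrix.toEuclideanLin B x) := by
  simp [Matrix.toEuclideanLin_apply, Matrix.mulVec_mulVec]

lemma toEuc_le {n : ℕ} (A : Matrix (Fin n) (Fin n) ℂ) (x : EuclideanSpace ℂ (Fin n)) :
    ‖Matrix.toEuclideanLin A x‖ ≤ ‖A‖ * ‖x‖ := by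
  rw [Matrix.l2_opNorm_def]
  exact ((Matrix.toEuclideanLin.trans LinearMap.toContinuousLinearMap) A).le_opNorm x

lemma sq_max_sub_le (a c : ℝ) : (max 0 a - max 0 c) ^ 2 ≤ (a - c) ^ 2 := by
  have h : |max 0 a - max 0 c| ≤ |a - c| := by
    rw [max_comm 0 a, max_comm 0 c]
    exact abs_max_sub_max_le_abs a c 0
  calc (max 0 a - max 0 c) ^ 2 = |max 0 a - max 0 c| ^ 2 := (sq_abs _).symm
    _ ≤ |a - c| ^ 2 := by gcongr <;> exact abs_nonneg _
    _ = (a - c) ^ 2 := sq_abs _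

lemma crelu_lip {n : ℕ} (z w : EuclideanSpace ℂ (Fin n)) :
    ‖creluC z - creluC w‖ ≤ ‖z - w‖ := by
  rw [EuclideanSpace.norm_eq, EuclideanSpace.norm_eq]
  apply Real.sqrt_le_sqrt
  apply Finset.sum_le_sum
  intro i _
  have h1 : (creluC z - creluC w) i = creluC z i - creluC w i := rfl
  have h2 : (z - w) i = z i - w i := rfl
  rw [h1, h2]
  have : ‖creluC z i - creluC w i‖ ≤ ‖z i - w i‖ := by
    rw [Complex.norm_def, Complex.norm_def]
    apply Real.sqrt_le_sqrt
    have hre : (creluC z i - creluC w i).re = max 0 (z i).re - max 0 (w i).re := rfl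
    have him : (creluC z i - creluC w i).im = max 0 (z i).im - max 0 (w i).im := rfl
    rw [Complex.normSq_apply, Complex.normSq_apply, hre, him, Complex.sub_re, Complex.sub_im]
    have := sq_max_sub_le (z i).re (w i).re
    have := sq_max_sub_le (z i).im (w i).im
    nlinarith
  calc ‖creluC z i - creluC w i‖ ^ 2 ≤ ‖z i - w i‖ ^ 2 := by gcongr <;> exact norm_nonneg _
    _ = _ := rfl

lemma creluC_zero {n : ℕ} : creluC (0 : EuclideanSpace ℂ (Fin n)) = 0 := by
  ext i
  show Complex.mk (max 0 (0:ℂ).re) (max 0 (0:ℂ).im) = 0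
  simp [Complex.ext_iff]

lemma crelu_norm_le {n : ℕ} (z : EuclideanSpace ℂ (Fin n)) : ‖creluC z‖ ≤ ‖z‖ := by
  have := crelu_lip z (0 : EuclideanSpace ℂ (Fin n))
  rwa [creluC_zero, sub_zero, sub_zero] at this

-- product of M_{m-1} * ... * M_0
noncomputable def pdProd {n : ℕ} (M : ℕ → Matrix (Fin n) (Fin n) ℂ) :
    ℕ → Matrix (Fin n) (Fin n) ℂ
  | 0 => 1
  | (m + 1) => M m * pdProd M m

lemma pdProd_rev {n : ℕ} : ∀ (m : ℕ) (f M : ℕ → Matrix (Fin n) (Fin n) ℂ),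
    (∀ k, k < m → M k = f (m - 1 - k)) →
    pdProd M m = (List.ofFn (fun i : Fin m => f (i : ℕ))).prod := by
  intro m
  induction m with
  | zero => intro f M _; simp [pdProd]
  | succ m ih =>
    intro f M h
    have hofn : (List.ofFn (fun i : Fin (m+1) => f (i : ℕ)))
        = f 0 :: List.ofFn (fun i : Fin m => f ((i : ℕ) + 1)) := by
      rw [List.ofFn_succ]; simp
    rw [hofn, List.prod_cons]
    show M m * pdProd M m = _
    have hm0 : m + 1 - 1 - m = 0 := by omega
    have hm : M m = f 0 := by rw [h m (Nat.lt_succ_self m), hm0]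
    have hrest : pdProd M m = (List.ofFn (fun i : Fin m => f ((i : ℕ) + 1))).prod := by
      apply ih (fun j => f (j + 1)) M
      intro k hk
      have : m + 1 - 1 - k = (m - 1 - k) + 1 := by omega
      rw [h k (hk.trans (Nat.lt_succ_self m)), this]
    rw [hm, hrest]

lemma dcNet_congr {n : ℕ} [NeZero n] {D C D' C' : ℕ → Fin n → ℂ}
    {β β' : ℕ → EuclideanSpace ℂ (Fin n)} {act act' : ℕ → Bool} :
    ∀ (m : ℕ), (∀ k, k < m → D k = D' k ∧ C k = C' k ∧ β k = β' k ∧ act k = act' k) →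
    ∀ x, dcNet D C β act m x = dcNet D' C' β' act' m x := by
  intro m
  induction m with
  | zero => intro _ x; rfl
  | succ m ih =>
    intro h x
    obtain ⟨h1, h2, h3, h4⟩ := h m (Nat.lt_succ_self m)
    rw [dcNet_succ, dcNet_succ, h1, h2, h3, h4,
      ih (fun k hk => h k (hk.trans (Nat.lt_succ_self m))) x]

lemma dcNet_add {n : ℕ} [NeZero n] (D C : ℕ → Fin n → ℂ) (β : ℕ → EuclideanSpace ℂ (Fin n))
    (act : ℕ → Bool) (s : ℕ) :
    ∀ (t : ℕ) (x), dcNet D C β act (s + t) x =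
      dcNet (fun k => D (s + k)) (fun k => C (s + k)) (fun k => β (s + k))
        (fun k => act (s + k)) t (dcNet D C β act s x) := by
  intro t
  induction t with
  | zero => intro x; rfl
  | succ t ih =>
    intro x
    rw [show s + (t + 1) = (s + t) + 1 from rfl, dcNet_succ, dcNet_succ, ih x]

lemma dcNet_lin {n : ℕ} [NeZero n] (D C : ℕ → Fin n → ℂ) (β : ℕ → EuclideanSpace ℂ (Fin n))
    (act : ℕ → Bool) :
    ∀ (m : ℕ), (∀ k, k < m → act k = false ∧ β k = 0) → ∀ y,
    dcNet D C β act m y =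
      Matrix.toEuclideanLin (pdProd (fun k => Matrix.diagonal (D k) * circMat (C k)) m) y := by
  intro m
  induction m with
  | zero =>
    intro _ y
    show y = _
    rw [show pdProd (fun k => Matrix.diagonal (D k) * circMat (C k)) 0
        = (1 : Matrix (Fin n) (Fin n) ℂ) from rfl, toEuc_one]
  | succ m ih =>
    intro h y
    obtain ⟨ha, hb⟩ := h m (Nat.lt_succ_self m)
    rw [dcNet_succ, ha, hb, ih (fun k hk => h k (hk.trans (Nat.lt_succ_self m))) y]
    show id (Matrix.toEuclideanLin (Matrix.diagonal (D m) * circMat (C m))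
        (Matrix.toEuclideanLin (pdProd _ m) y) + 0) = _
    rw [add_zero, ← toEuc_mul]
    rfl

/-- Block construction: extend a dc-network by `m` layers computing `x ↦ crelu(P x + bL)`. -/
lemma dc_block {n : ℕ} [NeZero n] (m : ℕ) (hm : 1 ≤ m)
    (B : Fin m → Matrix (Fin n) (Fin n) ℂ) (hAlt : Alternating B)
    (s : ℕ) (D C : ℕ → Fin n → ℂ) (β : ℕ → EuclideanSpace ℂ (Fin n)) (act : ℕ → Bool)
    (bL : EuclideanSpace ℂ (Fin n)) :
    ∃ (D' C' : ℕ → Fin n → ℂ) (β' : ℕ → EuclideanSpace ℂ (Fin n)) (act' : ℕ → Bool),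
      ∀ x, dcNet D' C' β' act' (s + m) x =
        creluC (Matrix.toEuclideanLin ((List.ofFn B).prod) (dcNet D C β act s x) + bL) := by
  have hcd : ∀ j : ℕ, ∃ d c : Fin n → ℂ,
      Matrix.diagonal d * circMat c =
        (if h : m - 1 - j < m then B ⟨m - 1 - j, h⟩ else 1) := by
    intro j
    have hlt : m - 1 - j < m := by omega
    rw [dif_pos hlt]
    rcases Nat.even_or_odd (m - 1 - j) with he | ho
    · obtain ⟨c, hc⟩ := (hAlt ⟨m - 1 - j, hlt⟩).1 he
      exact ⟨fun _ => 1, c, by rw [Matrix.diagonal_one, one_mul, ← hc]⟩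
    · obtain ⟨d, hd⟩ := (hAlt ⟨m - 1 - j, hlt⟩).2 ho
      exact ⟨d, fun k => if k = 0 then 1 else 0, by rw [circMat_delta, mul_one, ← hd]⟩
  choose Dv Cv hDv using hcd
  refine ⟨fun k => if k < s then D k else Dv (k - s),
          fun k => if k < s then C k else Cv (k - s),
          fun k => if k < s then β k else if k = s + (m - 1) then bL else 0,
          fun k => if k < s then act k else decide (k = s + (m - 1)), fun x => ?_⟩
  rw [dcNet_add]
  have hpref : dcNet (fun k => if k < s then D k else Dv (k - s))
      (fun k => if k < s then C k else Cv (k - s))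
      (fun k => if k < s then β k else if k = s + (m - 1) then bL else 0)
      (fun k => if k < s then act k else decide (k = s + (m - 1))) s x
      = dcNet D C β act s x :=
    dcNet_congr s (fun k hk => ⟨if_pos hk, if_pos hk, if_pos hk, if_pos hk⟩) x
  rw [hpref]
  set y := dcNet D C β act s x with hy
  -- the shifted block
  have hsh : ∀ k : ℕ, ¬ (s + k < s) := fun k => by omega
  have hshift : dcNet
      (fun k => (fun j => if j < s then D j else Dv (j - s)) (s + k))
      (fun k => (fun j => if j < s then C j else Cv (j - s)) (s + k))
      (fun k => (fun j => if j < s then β j else if j = s + (m - 1) then bL else 0) (s + k))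
      (fun k => (fun j => if j < s then act j else decide (j = s + (m - 1))) (s + k)) m y
      = dcNet (fun k => Dv k) (fun k => Cv k) (fun k => if k = m - 1 then bL else 0)
        (fun k => decide (k = m - 1)) m y := by
    apply dcNet_congr m
    intro k _
    refine ⟨?_, ?_, ?_, ?_⟩
    · show (if s + k < s then D (s + k) else Dv (s + k - s)) = Dv k
      rw [if_neg (hsh k), Nat.add_sub_cancel_left]
    · show (if s + k < s then C (s + k) else Cv (s + k - s)) = Cv k
      rw [if_neg (hsh k), Nat.add_sub_cancel_left]
    · show (if s + k < s then β (s + k) else if s + k = s + (m - 1) then bL else 0)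
        = if k = m - 1 then bL else 0
      rw [if_neg (hsh k)]
      by_cases h : k = m - 1
      · subst h; rw [if_pos rfl, if_pos rfl]
      · rw [if_neg (fun hc => h (by omega)), if_neg h]
    · show (if s + k < s then act (s + k) else decide (s + k = s + (m - 1)))
        = decide (k = m - 1)
      rw [if_neg (hsh k)]
      exact decide_eq_decide.mpr (by omega)
  rw [hshift]
  -- now compute the clean block
  have hm' : m = (m - 1) + 1 := by omega
  rw [show dcNet (fun k => Dv k) (fun k => Cv k) (fun k => if k = m - 1 then bL else 0)
        (fun k => decide (k = m - 1)) m y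
      = dcNet (fun k => Dv k) (fun k => Cv k) (fun k => if k = m - 1 then bL else 0)
        (fun k => decide (k = m - 1)) ((m - 1) + 1) y from by rw [← hm']]
  rw [dcNet_succ]
  rw [dcNet_lin _ _ _ _ (m - 1)
    (fun k hk => ⟨decide_eq_false (by omega), if_neg (by omega)⟩) y]
  have hd : (decide (m - 1 = m - 1)) = true := by simp
  rw [hd, if_pos rfl, if_pos rfl]
  rw [← toEuc_mul]
  have hprod : Matrix.diagonal (Dv (m - 1)) * circMat (Cv (m - 1)) *
      pdProd (fun k => Matrix.diagonal (Dv k) * circMat (Cv k)) (m - 1)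
      = (List.ofFn B).prod := by
    have h1 : Matrix.diagonal (Dv (m - 1)) * circMat (Cv (m - 1)) *
        pdProd (fun k => Matrix.diagonal (Dv k) * circMat (Cv k)) (m - 1)
        = pdProd (fun k => Matrix.diagonal (Dv k) * circMat (Cv k)) ((m - 1) + 1) := rfl
    rw [h1, ← hm']
    rw [pdProd_rev m (fun j => if h : j < m then B ⟨j, h⟩ else 1) _ (fun k _ => hDv k)]
    have h2 : (fun i : Fin m => if h : (i : ℕ) < m then B ⟨(i : ℕ), h⟩ else 1) = B := by
      funext i
      rw [dif_pos i.isLt]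
    rw [h2]
  rw [hprod]

lemma reluNet_bdd {n : ℕ} (W : ℕ → Matrix (Fin n) (Fin n) ℂ)
    (b : ℕ → EuclideanSpace ℂ (Fin n)) (X : Set (EuclideanSpace ℂ (Fin n)))
    (hX : Bornology.IsBounded X) :
    ∀ L, ∃ R : ℝ, 0 ≤ R ∧ ∀ x ∈ X, ‖reluNet W b L x‖ ≤ R := by
  intro L
  induction L with
  | zero =>
    obtain ⟨R, hR⟩ := isBounded_iff_forall_norm_le.mp hX
    exact ⟨max R 0, le_max_right _ _, fun x hx => le_trans (hR x hx) (le_max_left _ _)⟩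
  | succ L ih =>
    obtain ⟨R, hR0, hR⟩ := ih
    refine ⟨‖W L‖ * R + ‖b L‖,
      add_nonneg (mul_nonneg (norm_nonneg _) hR0) (norm_nonneg _), fun x hx => ?_⟩
    calc ‖reluNet W b (L+1) x‖
        = ‖creluC (Matrix.toEuclideanLin (W L) (reluNet W b L x) + b L)‖ := rfl
      _ ≤ ‖Matrix.toEuclideanLin (W L) (reluNet W b L x) + b L‖ := crelu_norm_le _
      _ ≤ ‖Matrix.toEuclideanLin (W L) (reluNet W b L x)‖ + ‖b L‖ := norm_add_le _ _
      _ ≤ ‖W L‖ * ‖reluNet W b L x‖ + ‖b L‖ := by gcongr; exact toEuc_le _ _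
      _ ≤ ‖W L‖ * R + ‖b L‖ :=
          add_le_add_left (mul_le_mul_of_nonneg_left (hR x hx) (norm_nonneg _)) _

lemma dc_key {n : ℕ} [NeZero n]
    (huhtanen : ∀ (M : Matrix (Fin n) (Fin n) ℂ) (ε : ℝ), 0 < ε →
      ∃ B : Fin (2 * n - 1) → Matrix (Fin n) (Fin n) ℂ,
        Alternating B ∧ ‖(List.ofFn B).prod - M‖ < ε)
    (W : ℕ → Matrix (Fin n) (Fin n) ℂ) (b : ℕ → EuclideanSpace ℂ (Fin n))
    (X : Set (EuclideanSpace ℂ (Fin n))) (hX : Bornology.IsBounded X) :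
    ∀ (L : ℕ) (ε : ℝ), 0 < ε →
    ∃ (D C : ℕ → Fin n → ℂ) (β : ℕ → EuclideanSpace ℂ (Fin n)) (act : ℕ → Bool),
      ∀ x ∈ X, ‖reluNet W b L x - dcNet D C β act ((2 * n - 1) * L) x‖ < ε := by
  intro L
  induction L with
  | zero =>
    intro ε hε
    refine ⟨0, 0, 0, fun _ => false, fun x hx => ?_⟩
    rw [Nat.mul_zero]
    show ‖x - x‖ < ε
    simpa using hε
  | succ L ih =>
    intro ε hε
    obtain ⟨R, hR0, hR⟩ := reluNet_bdd W b X hX L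
    set nw := ‖W L‖ with hnw
    have hnw0 : 0 ≤ nw := norm_nonneg _
    have hγ : 0 < ε / (2 * (nw + 1)) := by positivity
    set γ := ε / (2 * (nw + 1)) with hγdef
    have hδ : 0 < ε / (2 * (R + γ + 1)) := by positivity
    set δ := ε / (2 * (R + γ + 1)) with hδdef
    obtain ⟨D, C, β, act, hDC⟩ := ih γ hγ
    obtain ⟨B, hAlt, hP⟩ := huhtanen (W L) δ hδ
    have hm1 : 1 ≤ 2 * n - 1 := by
      have := Nat.pos_of_ne_zero (NeZero.ne n); omega
    obtain ⟨D', C', β', act', hblock⟩ :=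
      dc_block (2 * n - 1) hm1 B hAlt ((2 * n - 1) * L) D C β act (b L)
    refine ⟨D', C', β', act', fun x hx => ?_⟩
    have hdepth : (2 * n - 1) * (L + 1) = (2 * n - 1) * L + (2 * n - 1) := by ring
    rw [hdepth, hblock x]
    set P := (List.ofFn B).prod with hPdef
    set u := reluNet W b L x with hu
    set y := dcNet D C β act ((2 * n - 1) * L) x with hy
    have huR : ‖u‖ ≤ R := hR x hx
    have huy : ‖u - y‖ < γ := hDC x hx
    have hWP : ‖W L - P‖ < δ := by rw [norm_sub_rev]; exact hP
    have hyR : ‖y‖ ≤ R + γ := by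
      have h1 : y = u - (u - y) := by abel
      calc ‖y‖ = ‖u - (u - y)‖ := by rw [← h1]
        _ ≤ ‖u‖ + ‖u - y‖ := norm_sub_le _ _
        _ ≤ R + γ := add_le_add huR (le_of_lt huy)
    have hsplit : Matrix.toEuclideanLin (W L) u - Matrix.toEuclideanLin P y
        = Matrix.toEuclideanLin (W L) (u - y) + Matrix.toEuclideanLin (W L - P) y := by
      rw [map_sub, map_sub, LinearMap.sub_apply]
      abel
    have e1 : (nw + 1) * γ = ε / 2 := by
      rw [hγdef]; field_simp
    have e2 : δ * (R + γ + 1) = ε / 2 := by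
      rw [hδdef]; field_simp
    calc ‖reluNet W b (L + 1) x - creluC (Matrix.toEuclideanLin P y + b L)‖
        = ‖creluC (Matrix.toEuclideanLin (W L) u + b L)
            - creluC (Matrix.toEuclideanLin P y + b L)‖ := rfl
      _ ≤ ‖(Matrix.toEuclideanLin (W L) u + b L) - (Matrix.toEuclideanLin P y + b L)‖ :=
          crelu_lip _ _
      _ = ‖Matrix.toEuclideanLin (W L) u - Matrix.toEuclideanLin P y‖ := by
          rw [add_sub_add_right_eq_sub]
      _ = ‖Matrix.toEuclideanLin (W L) (u - y) + Matrix.toEuclideanLin (W L - P) y‖ := by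
          rw [hsplit]
      _ ≤ ‖Matrix.toEuclideanLin (W L) (u - y)‖ + ‖Matrix.toEuclideanLin (W L - P) y‖ :=
          norm_add_le _ _
      _ ≤ nw * ‖u - y‖ + ‖W L - P‖ * ‖y‖ := add_le_add (toEuc_le _ _) (toEuc_le _ _)
      _ < ε := by nlinarith [norm_nonneg (u - y), norm_nonneg (W L - P), norm_nonneg y]

/-- Assuming the Huhtanen–Perämäki approximation theorem, any deep ReLU network of
width `n` and depth `L` is approximated uniformly on any bounded set `X`, to arbitrary
precision, by a diagonal-circulant network of width `n` and depth `(2n−1)L`. -/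
theorem dcnn_approximates_deep_relu_network {n : ℕ} [NeZero n]
    (huhtanen : ∀ (M : Matrix (Fin n) (Fin n) ℂ) (ε : ℝ), 0 < ε →
      ∃ B : Fin (2 * n - 1) → Matrix (Fin n) (Fin n) ℂ,
        Alternating B ∧ ‖(List.ofFn B).prod - M‖ < ε)
    (L : ℕ) (W : ℕ → Matrix (Fin n) (Fin n) ℂ) (b : ℕ → EuclideanSpace ℂ (Fin n))
    (X : Set (EuclideanSpace ℂ (Fin n))) (hX : Bornology.IsBounded X)
    (ε : ℝ) (hε : 0 < ε) :
    ∃ (D C : ℕ → Fin n → ℂ) (β : ℕ → EuclideanSpace ℂ (Fin n)) (act : ℕ → Bool),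
      ∀ x ∈ X, ‖reluNet W b L x - dcNet D C β act ((2 * n - 1) * L) x‖ < ε :=
  dc_key huhtanen W b X hX L ε hε
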